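/- Let v ∈ ℝ, C ∈ ℝ, and let f : ℝ → ℝ be a C² function with period 2π satisfying f'' − v f' + f² + 4f + v² + C = 0 on ℝ, where v ≠ 0. Then f is constant. (More precisely: multiplying by f' and integrating over a period yields v ∫₀^{2π} (f')² dθ = 0, hence f' ≡ 0.) -/

import Mathlib

open Real MeasureTheory intervalIntegral

theorem stmt3 (v C : ℝ) (hv : v ≠ 0) (f : ℝ → ℝ)
    (hf : ContDiff ℝ 2 f) (hper : Function.Periodic f (2 * π))
    (hode : ∀ θ, deriv (deriv f) θ - v * deriv f θ + (f θ) ^ 2 + 4 * f θ + v ^ 2 + C = 0) :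
    (∀ θ, deriv f θ = 0) ∧ ∃ a : ℝ, ∀ θ, f θ = a := by
  have hf1 : ContDiff ℝ 1 f := hf.of_le one_le_two
  have hdf : Differentiable ℝ f := hf1.differentiable one_ne_zero
  have hdf' : ContDiff ℝ 1 (deriv f) := by
    have := (contDiff_succ_iff_deriv (n := 1)).mp (by exact_mod_cast hf)
    exact this.2.2
  have hdf'd : Differentiable ℝ (deriv f) := hdf'.differentiable one_ne_zero
  have hcf' : Continuous (deriv f) := hdf'd.continuous
  -- G with G' = v (f')²
  have hperd : Function.Periodic (deriv f) (2*π) := fun x => by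
    rw [← deriv_comp_add_const f (2*π) x]
    congr 1
    ext y
    exact hper y
  set G : ℝ → ℝ := fun θ => (deriv f θ)^2/2 + (f θ)^3/3 + 2*(f θ)^2 + (v^2+C)*(f θ) with hG
  have hGderiv : ∀ θ, HasDerivAt G (v * (deriv f θ)^2) θ := by
    intro θ
    have h1 : HasDerivAt f (deriv f θ) θ := hdf.differentiableAt.hasDerivAt
    have h2 : HasDerivAt (deriv f) (deriv (deriv f) θ) θ := hdf'd.differentiableAt.hasDerivAt
    have : HasDerivAt G (deriv (deriv f) θ * (2 * deriv f θ) / 2 +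
        (3 * f θ ^ 2 * deriv f θ) / 3 + 2 * (2 * f θ * deriv f θ) +
        (v^2+C) * deriv f θ) θ := by
      apply HasDerivAt.add
      apply HasDerivAt.add
      apply HasDerivAt.add
      · exact ((h2.pow 2).div_const 2).congr_deriv (by ring)
      · exact ((h1.pow 3).div_const 3).congr_deriv (by ring)
      · exact ((h1.pow 2).const_mul 2).congr_deriv (by ring)
      · exact (h1.const_mul (v^2+C)).congr_deriv (by ring)
    convert this using 1
    have h := hode θ
    linear_combination (-(deriv f θ)) * h
  have hπ : 0 < 2 * π := by positivity
  -- integral of G' over period is zero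
  have hGper : G (2 * π) = G 0 := by
    have h1 : f (2 * π) = f 0 := by simpa using hper 0
    have h2 : deriv f (2 * π) = deriv f 0 := by simpa using hperd 0
    simp [hG, h1, h2]
  have hint : ∫ θ in (0:ℝ)..(2*π), v * (deriv f θ)^2 = 0 := by
    rw [integral_eq_sub_of_hasDerivAt (fun θ _ => hGderiv θ)
      ((continuous_const.mul (hcf'.pow 2)).intervalIntegrable 0 (2*π))]
    rw [hGper]; ring
  have hint2 : ∫ θ in (0:ℝ)..(2*π), (deriv f θ)^2 = 0 := by
    have : v * ∫ θ in (0:ℝ)..(2*π), (deriv f θ)^2 = 0 := by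
      rw [← intervalIntegral.integral_const_mul]; exact hint
    exact (mul_eq_zero.mp this).resolve_left hv
  -- deriv f = 0 on Ioc 0 (2π)
  have hae : (fun θ => (deriv f θ)^2) =ᵐ[volume.restrict (Set.Ioc 0 (2*π))] 0 := by
    have := (integral_eq_zero_iff_of_le_of_nonneg_ae hπ.le
      (Filter.Eventually.of_forall fun θ => sq_nonneg _)
      ((hcf'.pow 2).intervalIntegrable 0 (2*π))).mp hint2
    exact this
  have hzero : ∀ θ ∈ Set.Ioc 0 (2*π), deriv f θ = 0 := by
    have := Measure.eqOn_Ioc_of_ae_eq (μ := volume) hae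
      ((hcf'.pow 2).continuousOn) continuousOn_const
    intro θ hθ
    have := this hθ
    simpa [pow_eq_zero_iff] using this
  have hzall : ∀ θ, deriv f θ = 0 := by
    intro θ
    obtain ⟨y, hy, hyeq⟩ := (hperd).exists_mem_Ico₀ hπ θ
    rw [hyeq]
    rcases eq_or_lt_of_le hy.1 with h | h
    · rw [← h]
      have h2 : deriv f (2*π) = deriv f 0 := by simpa using hperd 0
      rw [← h2]; exact hzero _ ⟨hπ, le_refl _⟩
    · exact hzero _ ⟨h, hy.2.le⟩
  refine ⟨hzall, f 0, fun θ => ?_⟩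
  exact is_const_of_deriv_eq_zero hdf hzall θ 0
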